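/- Let f ∈ RF with sign ε of the Walsh transform, m even, and β ∈ 𝔽_q^×. Then ∑_{y,z ∈ 𝔽_p^×} ∑_{x ∈ 𝔽_q} ζ_p^{y f(x) + z Tr(βx)} equals ε(p-1)²√(p*)^m if f*(β)=0, and -ε(p-1)√(p*)^m if f*(β)≠0. -/
import Mathlib

open Complex Polynomial Finset

noncomputable def zp (p : ℕ) : ℂ := Complex.exp (2 * Real.pi * Complex.I / p)

noncomputable def sqrtPstar (p : ℕ) : ℂ :=
  if p % 4 = 1 then (Real.sqrt p : ℂ) else (Real.sqrt p : ℂ) * Complex.I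

section helpers
variable (p : ℕ) [Fact p.Prime]

lemma zp_prim : IsPrimitiveRoot (zp p) p := by
  simpa [zp] using Complex.isPrimitiveRoot_exp p (Fact.out : p.Prime).ne_zero

lemma zp_pow_mod (a : ℕ) : zp p ^ (a % p) = zp p ^ a := by
  conv_rhs => rw [← Nat.div_add_mod a p]
  rw [pow_add, pow_mul, (zp_prim p).pow_eq_one, one_pow, one_mul]

lemma zp_pow_val_natCast (a : ℕ) : zp p ^ ((a : ZMod p)).val = zp p ^ a := by
  haveI : NeZero p := ⟨(Fact.out : p.Prime).ne_zero⟩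
  rw [ZMod.val_natCast, zp_pow_mod]

lemma zp_pow_val_mul (u v : ZMod p) :
    zp p ^ (u * v).val = (zp p ^ u.val) ^ v.val := by
  haveI : NeZero p := ⟨(Fact.out : p.Prime).ne_zero⟩
  have : u * v = ((u.val * v.val : ℕ) : ZMod p) := by
    rw [Nat.cast_mul, ZMod.natCast_val, ZMod.natCast_val, ZMod.cast_id, ZMod.cast_id]
  rw [this, zp_pow_val_natCast, pow_mul]

lemma zp_sum_all : ∑ j : ZMod p, zp p ^ j.val = 0 := by
  haveI : NeZero p := ⟨(Fact.out : p.Prime).ne_zero⟩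
  have h1 : ∑ j : ZMod p, zp p ^ j.val = ∑ i ∈ Finset.range p, zp p ^ i := by
    refine Finset.sum_nbij' (fun j => j.val) (fun i => (i : ZMod p)) ?_ ?_ ?_ ?_ ?_
    · intro j _; exact Finset.mem_range.mpr (ZMod.val_lt j)
    · intro i _; exact Finset.mem_univ _
    · intro j _; exact ZMod.natCast_rightInverse j
    · intro i hi; exact ZMod.val_cast_of_lt (Finset.mem_range.mp hi)
    · intro j _; rfl
  rw [h1]
  exact (zp_prim p).geom_sum_eq_zero (Fact.out : p.Prime).one_lt

lemma zp_sum_units : ∑ c : (ZMod p)ˣ, zp p ^ (c : ZMod p).val = -1 := by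
  haveI : NeZero p := ⟨(Fact.out : p.Prime).ne_zero⟩
  have h2 : ∑ c : (ZMod p)ˣ, zp p ^ (c : ZMod p).val
      = ∑ j ∈ Finset.univ.erase (0 : ZMod p), zp p ^ j.val := by
    refine Finset.sum_bij (fun c _ => (c : ZMod p)) ?_ ?_ ?_ ?_
    · intro c _; exact Finset.mem_erase.mpr ⟨c.ne_zero, Finset.mem_univ _⟩
    · intro c _ d _ hcd; exact Units.ext hcd
    · intro j hj; exact ⟨Units.mk0 j (Finset.mem_erase.mp hj).1, Finset.mem_univ _, rfl⟩
    · intro c _; rfl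
  have h3 := Finset.add_sum_erase Finset.univ (fun j : ZMod p => zp p ^ j.val)
    (Finset.mem_univ (0 : ZMod p))
  rw [zp_sum_all p] at h3
  rw [h2]
  have : zp p ^ (0 : ZMod p).val = 1 := by simp [ZMod.val_zero]
  linear_combination h3 - this

end helpers

section galois
variable (p : ℕ) [Fact p.Prime]

lemma galois_twist (v : ZMod p → ℚ)
    (h0 : ∑ j : ZMod p, (v j : ℂ) * zp p ^ j.val = 0)
    (c : ℕ) (hc : c.Coprime p) :
    ∑ j : ZMod p, (v j : ℂ) * (zp p ^ c) ^ j.val = 0 := by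
  have hζ : IsPrimitiveRoot (zp p) p := zp_prim p
  have hζc : IsPrimitiveRoot (zp p ^ c) p := hζ.pow_of_coprime c hc
  set P : ℚ[X] := ∑ j : ZMod p, Polynomial.C (v j) * X ^ (j.val) with hP
  have hPz : ∀ w : ℂ, (Polynomial.aeval w) P = ∑ j : ZMod p, (v j : ℂ) * w ^ j.val := by
    intro w
    rw [hP, map_sum]
    refine Finset.sum_congr rfl fun j _ => ?_
    simp
  have h1 : Polynomial.aeval (zp p) P = 0 := by rw [hPz]; exact h0
  have hmin : minpoly ℚ (zp p) ∣ P := minpoly.dvd ℚ (zp p) h1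
  have heq : minpoly ℚ (zp p) = minpoly ℚ (zp p ^ c) := by
    rw [← Polynomial.cyclotomic_eq_minpoly_rat hζ (Fact.out : p.Prime).pos,
      ← Polynomial.cyclotomic_eq_minpoly_rat hζc (Fact.out : p.Prime).pos]
  obtain ⟨q, hq⟩ := hmin
  have h2 : Polynomial.aeval (zp p ^ c) P = 0 := by
    rw [hq, map_mul, heq, minpoly.aeval, zero_mul]
  rw [← hPz]; exact h2

end galois

lemma sqrtPstar_pow_even (p : ℕ) (m : ℕ) (hme : Even m) :
    ((((if p % 4 = 1 then (p : ℚ) else -(p : ℚ)) ^ (m / 2) : ℚ)) : ℂ)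
      = sqrtPstar p ^ m := by
  obtain ⟨k, hk⟩ := hme
  have hk2 : m = 2 * k := by omega
  have hm2 : m / 2 = k := by omega
  have hsq : sqrtPstar p ^ 2 = if p % 4 = 1 then (p : ℂ) else -(p : ℂ) := by
    unfold sqrtPstar
    split_ifs
    · rw [← Complex.ofReal_pow, Real.sq_sqrt (by positivity)]; norm_num
    · rw [mul_pow, Complex.I_sq, ← Complex.ofReal_pow, Real.sq_sqrt (by positivity)]
      push_cast; ring
  rw [hk2, Nat.mul_div_cancel_left k (by norm_num), pow_mul, hsq]
  split_ifs <;> push_cast <;> ring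

lemma sum_fiber {F : Type} [Fintype F] (p : ℕ) [NeZero p]
    (g : F → ZMod p) (w : ZMod p → ℂ) :
    ∑ x : F, w (g x)
      = ∑ j : ZMod p, ((Finset.univ.filter fun x => g x = j).card : ℂ) * w j := by
  rw [← Finset.sum_fiberwise_of_maps_to (g := g) (t := Finset.univ)
    (fun x _ => Finset.mem_univ (g x)) (fun x => w (g x))]
  refine Finset.sum_congr rfl fun j _ => ?_
  rw [Finset.sum_congr rfl (fun x hx => by rw [(Finset.mem_filter.mp hx).2]),
    Finset.sum_const, nsmul_eq_mul]

lemma twisted (p : ℕ) [Fact p.Prime] {F : Type} [Fintype F]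
    (g : F → ZMod p) (b : ZMod p) (N : ℚ)
    (hWg : ∑ x : F, zp p ^ (g x).val = (N : ℂ) * zp p ^ b.val)
    (c : (ZMod p)ˣ) :
    ∑ x : F, zp p ^ ((c : ZMod p) * g x).val
      = (N : ℂ) * zp p ^ ((c : ZMod p) * b).val := by
  haveI : NeZero p := ⟨(Fact.out : p.Prime).ne_zero⟩
  set n : ZMod p → ℕ := fun j => (Finset.univ.filter fun x => g x = j).card with hn
  set v : ZMod p → ℚ := fun j => (n j : ℚ) - N * (if j = b then 1 else 0) with hv
  have hWg' : ∑ j : ZMod p, (n j : ℂ) * zp p ^ j.val = (N : ℂ) * zp p ^ b.val := by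
    rw [← sum_fiber p g (fun j => zp p ^ j.val)]; exact hWg
  have h0 : ∑ j : ZMod p, (v j : ℂ) * zp p ^ j.val = 0 := by
    have hite : ∑ j : ZMod p, (if j = b then (1:ℂ) else 0) * zp p ^ j.val
        = zp p ^ b.val := by
      rw [Finset.sum_eq_single b] <;> simp +contextual
    calc ∑ j : ZMod p, (v j : ℂ) * zp p ^ j.val
        = ∑ j : ZMod p, ((n j : ℂ) * zp p ^ j.val
            - (N : ℂ) * ((if j = b then (1:ℂ) else 0) * zp p ^ j.val)) := by
          refine Finset.sum_congr rfl fun j _ => ?_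
          simp only [hv]; push_cast; split_ifs <;> ring
      _ = 0 := by
          rw [Finset.sum_sub_distrib, ← Finset.mul_sum, hite, hWg']; ring
  have hgal := galois_twist p v h0 (c : ZMod p).val (ZMod.val_coe_unit_coprime c)
  have hback : ∑ j : ZMod p, (n j : ℂ) * zp p ^ ((c : ZMod p) * j).val
      = (N : ℂ) * zp p ^ ((c : ZMod p) * b).val := by
    have hpow : ∀ j : ZMod p, (zp p ^ (c : ZMod p).val) ^ j.val
        = zp p ^ ((c : ZMod p) * j).val := fun j => (zp_pow_val_mul p _ j).symm
    have hite : ∑ j : ZMod p, (if j = b then (1:ℂ) else 0) * zp p ^ ((c : ZMod p) * j).val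
        = zp p ^ ((c : ZMod p) * b).val := by
      rw [Finset.sum_eq_single b] <;> simp +contextual
    have h1 : ∑ j : ZMod p, (v j : ℂ) * zp p ^ ((c : ZMod p) * j).val = 0 := by
      calc ∑ j : ZMod p, (v j : ℂ) * zp p ^ ((c : ZMod p) * j).val
          = ∑ j : ZMod p, (v j : ℂ) * (zp p ^ (c : ZMod p).val) ^ j.val :=
            Finset.sum_congr rfl fun j _ => by rw [hpow]
        _ = 0 := hgal
    have h2 : ∑ j : ZMod p, (v j : ℂ) * zp p ^ ((c : ZMod p) * j).val
        = ∑ j : ZMod p, (n j : ℂ) * zp p ^ ((c : ZMod p) * j).val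
          - (N : ℂ) * zp p ^ ((c : ZMod p) * b).val := by
      rw [← hite, Finset.mul_sum, ← Finset.sum_sub_distrib]
      refine Finset.sum_congr rfl fun j _ => ?_
      simp only [hv]; push_cast; split_ifs <;> ring
    rw [h2] at h1; linear_combination h1
  calc ∑ x : F, zp p ^ ((c : ZMod p) * g x).val
      = ∑ j : ZMod p, (n j : ℂ) * zp p ^ ((c : ZMod p) * j).val :=
        sum_fiber p g (fun j => zp p ^ ((c : ZMod p) * j).val)
    _ = (N : ℂ) * zp p ^ ((c : ZMod p) * b).val := hback

theorem stmt_11 (p m : ℕ) [Fact p.Prime] (hp2 : p ≠ 2) (hme : Even m) (hm : 0 < m)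
    (F : Type) [Field F] [Fintype F] [DecidableEq F] [Algebra (ZMod p) F]
    (hcard : Fintype.card F = p ^ m)
    (f fstar : F → ZMod p) (ε : ℤ) (hε : ε = 1 ∨ ε = -1)
    (hW : ∀ β : F, ∑ x : F, zp p ^ (f x + Algebra.trace (ZMod p) F (β * x)).val
      = (ε : ℂ) * sqrtPstar p ^ m * zp p ^ (fstar β).val)
    (hf0 : f 0 = 0) (h : ℕ) (hh : Nat.gcd (h - 1) (p - 1) = 1)
    (hhom : ∀ (a : (ZMod p)ˣ) (x : F),
      f (algebraMap (ZMod p) F (a : ZMod p) * x) = (a : ZMod p) ^ h * f x)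
    (β : F) (hβ : β ≠ 0) :
    ∑ y : (ZMod p)ˣ, ∑ z : (ZMod p)ˣ, ∑ x : F,
        zp p ^ (((y : ZMod p) * f x + (z : ZMod p) * Algebra.trace (ZMod p) F (β * x)).val)
      = if fstar β = 0 then (ε : ℂ) * (p - 1) ^ 2 * sqrtPstar p ^ m
        else -(ε : ℂ) * (p - 1) * sqrtPstar p ^ m := by
  haveI : NeZero p := ⟨(Fact.out : p.Prime).ne_zero⟩
  have hp3 : 3 ≤ p := by
    have := (Fact.out : p.Prime).two_le
    omega
  set k := h - 1 with hk
  have hhk : h = k + 1 := by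
    rcases Nat.eq_zero_or_pos h with h0 | h1
    · exfalso
      have hk0 : k = 0 := by omega
      rw [hk0] at hh
      simp at hh
      omega
    · omega
  have hcop : (Nat.card (ZMod p)ˣ).Coprime k := by
    rw [Nat.card_eq_fintype_card, ZMod.card_units]
    exact Nat.coprime_comm.mp hh
  set σ : (ZMod p)ˣ ≃ (ZMod p)ˣ := (powCoprime hcop).symm with hσdef
  have hσ : ∀ u : (ZMod p)ˣ, (σ u) ^ k = u := fun u => (powCoprime hcop).apply_symm_apply u
  set g : F → ZMod p := fun x => f x + Algebra.trace (ZMod p) F (β * x) with hg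
  set q : ℚ := (if p % 4 = 1 then (p : ℚ) else -(p : ℚ)) ^ (m / 2) with hq
  set N : ℚ := ε * q with hN
  have hNC : ((N : ℚ) : ℂ) = (ε : ℂ) * sqrtPstar p ^ m := by
    rw [hN, Rat.cast_mul, Rat.cast_intCast, hq, sqrtPstar_pow_even p m hme]
  set b := fstar β with hb
  have hWg : ∑ x : F, zp p ^ (g x).val = (N : ℂ) * zp p ^ b.val := by
    rw [hNC]; exact hW β
  have hT := twisted p g b N hWg
  -- Step 1: evaluate each inner double term
  have hS : ∀ y z : (ZMod p)ˣ,
      ∑ x : F, zp p ^ (((y : ZMod p) * f x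
          + (z : ZMod p) * Algebra.trace (ZMod p) F (β * x)).val)
        = (N : ℂ) * zp p ^ ((((z * σ (y⁻¹ * z)) : (ZMod p)ˣ) : ZMod p) * b).val := by
    intro y z
    set a : (ZMod p)ˣ := σ (y⁻¹ * z) with hadef
    have ha : y * a ^ h = z * a := by
      rw [hhk, pow_succ, hadef, hσ (y⁻¹ * z)]
      group
    have haF : algebraMap (ZMod p) F (a : ZMod p) ≠ 0 := fun hzero =>
      a.ne_zero ((algebraMap (ZMod p) F).injective (by rw [hzero, map_zero]))
    set φ : F ≃ F := Equiv.mulLeft₀ (algebraMap (ZMod p) F (a : ZMod p)) haF with hφ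
    have hstep : ∀ x : F,
        zp p ^ (((y : ZMod p) * f (φ x)
            + (z : ZMod p) * Algebra.trace (ZMod p) F (β * φ x)).val)
          = zp p ^ ((((z * a : (ZMod p)ˣ) : ZMod p)) * g x).val := by
      intro x
      have h1 : f (φ x) = (a : ZMod p) ^ h * f x := hhom a x
      have h2 : Algebra.trace (ZMod p) F (β * φ x)
          = (a : ZMod p) * Algebra.trace (ZMod p) F (β * x) := by
        have : β * φ x = (a : ZMod p) • (β * x) := by
          rw [hφ, Algebra.smul_def]
          show β * (algebraMap (ZMod p) F (a : ZMod p) * x) = _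
          ring
        rw [this, map_smul, smul_eq_mul]
      rw [h1, h2]
      congr 1
      have hcoe : (y : ZMod p) * (a : ZMod p) ^ h = ((z * a : (ZMod p)ˣ) : ZMod p) := by
        rw [← Units.val_pow_eq_pow_val, ← Units.val_mul, ha]
      have hcoe2 : ((z * a : (ZMod p)ˣ) : ZMod p) = (z : ZMod p) * (a : ZMod p) :=
        Units.val_mul z a
      congr 1
      rw [hg]
      show (y : ZMod p) * ((a : ZMod p) ^ h * f x) + (z : ZMod p)
          * ((a : ZMod p) * Algebra.trace (ZMod p) F (β * x)) = _
      rw [← mul_assoc, hcoe, hcoe2]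
      ring
    calc ∑ x : F, zp p ^ (((y : ZMod p) * f x
            + (z : ZMod p) * Algebra.trace (ZMod p) F (β * x)).val)
        = ∑ x : F, zp p ^ (((y : ZMod p) * f (φ x)
            + (z : ZMod p) * Algebra.trace (ZMod p) F (β * φ x)).val) :=
          (Equiv.sum_comp φ _).symm
      _ = ∑ x : F, zp p ^ ((((z * a : (ZMod p)ˣ) : ZMod p)) * g x).val :=
          Finset.sum_congr rfl fun x _ => hstep x
      _ = (N : ℂ) * zp p ^ ((((z * a : (ZMod p)ˣ) : ZMod p)) * b).val := hT (z * a)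
  -- Step 2: reindex the double sum
  have hcardu : (Finset.univ : Finset (ZMod p)ˣ).card = p - 1 := by
    rw [Finset.card_univ, ZMod.card_units]
  set T : (ZMod p)ˣ → ℂ := fun c => (N : ℂ) * zp p ^ (((c : (ZMod p)ˣ) : ZMod p) * b).val
    with hTdef
  have hmain : ∑ y : (ZMod p)ˣ, ∑ z : (ZMod p)ˣ, ∑ x : F,
      zp p ^ (((y : ZMod p) * f x + (z : ZMod p) * Algebra.trace (ZMod p) F (β * x)).val)
      = ((p - 1 : ℕ) : ℂ) * ∑ c : (ZMod p)ˣ, T c := by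
    calc ∑ y : (ZMod p)ˣ, ∑ z : (ZMod p)ˣ, ∑ x : F,
        zp p ^ (((y : ZMod p) * f x + (z : ZMod p) * Algebra.trace (ZMod p) F (β * x)).val)
        = ∑ y : (ZMod p)ˣ, ∑ z : (ZMod p)ˣ, T (z * σ (y⁻¹ * z)) := by
          refine Finset.sum_congr rfl fun y _ => Finset.sum_congr rfl fun z _ => ?_
          rw [hS y z]
      _ = ∑ z : (ZMod p)ˣ, ∑ y : (ZMod p)ˣ, T (z * σ (y⁻¹ * z)) := Finset.sum_comm
      _ = ∑ z : (ZMod p)ˣ, ∑ c : (ZMod p)ˣ, T c := by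
          refine Finset.sum_congr rfl fun z _ => ?_
          have E : (ZMod p)ˣ ≃ (ZMod p)ˣ :=
            ((Equiv.inv (ZMod p)ˣ).trans (Equiv.mulRight z)).trans
              (σ.trans (Equiv.mulLeft z))
          exact Equiv.sum_comp
            (((Equiv.inv (ZMod p)ˣ).trans (Equiv.mulRight z)).trans
              (σ.trans (Equiv.mulLeft z))) T
      _ = ((p - 1 : ℕ) : ℂ) * ∑ c : (ZMod p)ˣ, T c := by
          rw [Finset.sum_const, hcardu, nsmul_eq_mul]
  rw [hmain]
  have hpm1 : ((p - 1 : ℕ) : ℂ) = (p : ℂ) - 1 := by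
    push_cast [Nat.cast_sub (by omega : 1 ≤ p)]; ring
  by_cases hb0 : b = 0
  · have hTc : ∀ c : (ZMod p)ˣ, T c = (N : ℂ) := by
      intro c; rw [hTdef]; simp [hb0]
    rw [Finset.sum_congr rfl fun c _ => hTc c, Finset.sum_const, hcardu, nsmul_eq_mul]
    rw [if_pos hb0, hNC, hpm1]
    ring
  · have hsum : ∑ c : (ZMod p)ˣ, T c = -(N : ℂ) := by
      have hbu : ∑ c : (ZMod p)ˣ, T c
          = ∑ c : (ZMod p)ˣ, (N : ℂ) * zp p ^ (((c * Units.mk0 b hb0 : (ZMod p)ˣ)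
              : ZMod p)).val := by
        refine Finset.sum_congr rfl fun c _ => ?_
        rw [hTdef]
        congr 2
      have hcomp : ∑ c : (ZMod p)ˣ, (N : ℂ)
            * zp p ^ ((((c * Units.mk0 b hb0 : (ZMod p)ˣ)) : ZMod p)).val
          = ∑ c : (ZMod p)ˣ, (N : ℂ) * zp p ^ ((c : ZMod p)).val :=
        Equiv.sum_comp (Equiv.mulRight (Units.mk0 b hb0))
          (fun c : (ZMod p)ˣ => (N : ℂ) * zp p ^ ((c : ZMod p)).val)
      rw [hbu, hcomp, ← Finset.mul_sum, zp_sum_units]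
      ring
    rw [hsum, if_neg hb0, hNC, hpm1]
    ring
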